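/- arXiv:2102.10724 — 2 statements merged into one kernel-verified Lean document; each statement's English description precedes it below -/
import Mathlib

section
/- For every integer m ≥ 1 and every real x > 0, the polygamma function satisfies (m-1)!/x^m + m!/(2 x^{m+1}) ≤ (-1)^{m+1} ψ^{(m)}(x) ≤ (m-1)!/x^m + m!/x^{m+1}. -/
/-- The digamma function `ψ = Γ'/Γ`. -/
noncomputable def digamma : ℝ → ℝ := fun x => deriv (fun t => Real.log (Real.Gamma t)) x

/-- The polygamma function of order `m`, the `m`-th derivative of the digamma function. -/
noncomputable def polygamma (m : ℕ) : ℝ → ℝ := iteratedDeriv m digamma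


open Real Set Filter Topology Finset

local notation "γ" => Real.eulerMascheroniConstant


lemma logGamma_diff {x : ℝ} (hx : 0 < x) :
    DifferentiableAt ℝ (fun t => Real.log (Real.Gamma t)) x := by
  exact ((Real.differentiableAt_Gamma (fun m => by nlinarith [Nat.cast_nonneg (α := ℝ) m])).log
    (Real.Gamma_ne_zero (fun m => by nlinarith [Nat.cast_nonneg (α := ℝ) m])))

lemma digamma_rec {x : ℝ} (hx : 0 < x) : digamma (x + 1) = digamma x + 1 / x := by
  unfold digamma
  rw [← deriv_comp_add_const, one_div, ← Real.deriv_log,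
    ← deriv_add (logGamma_diff hx) (Real.differentiableAt_log hx.ne')]
  apply Filter.EventuallyEq.deriv_eq
  filter_upwards [eventually_gt_nhds hx] with t ht
  simp only [Real.Gamma_add_one ht.ne', Real.log_mul ht.ne' (Real.Gamma_pos_of_pos ht).ne',
    add_comm, Pi.add_apply]

lemma digamma_one : digamma 1 = -γ := by
  have h := Real.eulerMascheroniConstant_eq_neg_deriv
  unfold digamma
  rw [deriv.log (Real.differentiableAt_Gamma (fun m => by nlinarith [Nat.cast_nonneg (α := ℝ) m]))
      (by norm_num), Real.Gamma_one]
  rw [h]; ring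

lemma digamma_mono {a b : ℝ} (ha : 0 < a) (hab : a ≤ b) : digamma a ≤ digamma b := by
  rcases eq_or_lt_of_le hab with rfl | h
  · exact le_refl _
  have hc := Real.convexOn_log_Gamma
  have h1 := hc.deriv_le_slope (mem_Ioi.mpr ha) (mem_Ioi.mpr (ha.trans h)) h
    (logGamma_diff ha)
  have h2 := hc.slope_le_deriv (mem_Ioi.mpr ha) (mem_Ioi.mpr (ha.trans h)) h
    (logGamma_diff (ha.trans h))
  exact h1.trans h2

noncomputable def H (N : ℕ) : ℝ := ∑ i ∈ Finset.range N, (1 : ℝ) / (i + 1)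

lemma digamma_nat (N : ℕ) : digamma (N + 1) = -γ + H N := by
  induction N with
  | zero => simp [digamma_one, H]
  | succ n ih =>
    have : ((n : ℝ) + 1) + 1 = ((n + 1 : ℕ) : ℝ) + 1 := by push_cast; ring
    rw [← this, digamma_rec (by positivity), ih]
    simp only [H, Finset.sum_range_succ]
    push_cast; ring

lemma digamma_sum {x : ℝ} (hx : 0 < x) (N : ℕ) :
    digamma (x + N) = digamma x + ∑ n ∈ Finset.range N, 1 / (x + n) := by
  induction N with
  | zero => simp
  | succ n ih =>
    have : x + ((n : ℝ) + 1) = (x + n) + 1 := by ring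
    rw [Nat.cast_succ, this, digamma_rec (by positivity), ih, Finset.sum_range_succ]
    ring

lemma F_summable {x : ℝ} (hx : 0 < x) :
    Summable (fun n : ℕ => 1 / ((n : ℝ) + 1) - 1 / (x + n)) := by
  apply Summable.of_norm_bounded
    (g := fun n : ℕ => (|x - 1| / min x 1) * (1 / ((n : ℝ) + 1) ^ 2))
  · apply Summable.mul_left
    have : Summable (fun n : ℕ => 1 / ((n : ℝ) ^ 2)) := by
      simpa using Real.summable_one_div_nat_pow.mpr (le_refl 2)
    have := (summable_nat_add_iff 1).mpr this
    simpa using this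
  · intro n
    have hxn : (0 : ℝ) < x + n := by positivity
    have hn1 : (0 : ℝ) < (n : ℝ) + 1 := by positivity
    have key : 1 / ((n : ℝ) + 1) - 1 / (x + n) = (x - 1) / (((n : ℝ) + 1) * (x + n)) := by
      field_simp; ring
    rw [key, norm_div, Real.norm_eq_abs, Real.norm_eq_abs,
      abs_of_pos (show (0:ℝ) < ((n : ℝ) + 1) * (x + n) by positivity)]
    have hmin : 0 < min x 1 := lt_min hx one_pos
    have h1 : min x 1 * ((n : ℝ) + 1) ≤ x + n := by
      rcases le_total x 1 with h | h
      · rw [min_eq_left h]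
        nlinarith [Nat.cast_nonneg (α := ℝ) n]
      · rw [min_eq_right h]
        nlinarith [Nat.cast_nonneg (α := ℝ) n]
    have hr : |x - 1| / min x 1 * (1 / ((n : ℝ) + 1) ^ 2)
        = |x - 1| / (min x 1 * ((n : ℝ) + 1) ^ 2) := by
      rw [div_mul_div_comm, mul_one]
    rw [hr]
    exact div_le_div_of_nonneg_left (abs_nonneg _) (by positivity) (by nlinarith)

lemma H_succ (N : ℕ) : H (N + 1) = H N + 1 / ((N : ℝ) + 1) := by
  simp [H, Finset.sum_range_succ]

lemma H_le (a b : ℕ) : H (a + b) ≤ H a + b / ((a : ℝ) + 1) := by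
  induction b with
  | zero => simp
  | succ n ih =>
    rw [← add_assoc, H_succ]
    have h1 : (1 : ℝ) / ((a : ℝ) + (n : ℝ) + 1) ≤ 1 / ((a : ℝ) + 1) := by
      apply one_div_le_one_div_of_le (by positivity)
      have := Nat.cast_nonneg (α := ℝ) n; linarith
    push_cast
    push_cast at ih
    have e : ((n:ℝ)+1)/((a:ℝ)+1) = (n:ℝ)/((a:ℝ)+1) + 1/((a:ℝ)+1) := by ring
    linarith

lemma digamma_eq_tsum {x : ℝ} (hx : 0 < x) :
    digamma x = -γ + ∑' n : ℕ, (1 / ((n : ℝ) + 1) - 1 / (x + n)) := by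
  set K := ⌈x⌉₊ with hKdef
  have hxK : x ≤ K := Nat.le_ceil x
  have hK1 : 1 ≤ K := Nat.one_le_ceil_iff.mpr hx
  have hK0 : (1 : ℝ) ≤ (K : ℝ) := by exact_mod_cast hK1
  set P : ℕ → ℝ := fun N => ∑ n ∈ Finset.range N, (1 / ((n : ℝ) + 1) - 1 / (x + n)) with hP
  have hPeq : ∀ N, P N = H N - (digamma (x + N) - digamma x) := by
    intro N
    rw [hP]
    simp only [Finset.sum_sub_distrib]
    rw [digamma_sum hx N, H]
    ring
  -- the bound
  have hbound : ∀ M : ℕ, |P (M + 1) - (digamma x + γ)| ≤ ((K : ℝ) + 1) / ((M : ℝ) + 1) := by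
    intro M
    have hM1 : (0 : ℝ) < (M : ℝ) + 1 := by positivity
    have e1 : digamma (((M : ℝ)) + 1) = -γ + H M := digamma_nat M
    have e2 : digamma (((M : ℝ) + 1) + K) = -γ + H (M + K) := by
      have := digamma_nat (M + K)
      push_cast at this
      rw [← this]; ring_nf
    have mono1 : digamma (((M : ℝ)) + 1) ≤ digamma (x + (M + 1)) :=
      digamma_mono (by positivity) (by linarith)
    have mono2 : digamma (x + (M + 1)) ≤ digamma (((M : ℝ) + 1) + K) :=
      digamma_mono (by positivity) (by push_cast; linarith)
    have hH1 : H (M + 1) = H M + 1 / ((M : ℝ) + 1) := H_succ M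
    have hH2 : H (M + K) ≤ H (M + 1) + ((K : ℝ) - 1) / ((M : ℝ) + 2) := by
      have h := H_le (M + 1) (K - 1)
      have hk : M + 1 + (K - 1) = M + K := by omega
      rw [hk] at h
      have : ((K - 1 : ℕ) : ℝ) = (K : ℝ) - 1 := by
        rw [Nat.cast_sub hK1]; norm_num
      rw [this] at h
      push_cast at h
      have e : (M:ℝ)+1+1 = (M:ℝ)+2 := by ring
      rw [e] at h
      exact h
    have hPM : P (M + 1) = H (M + 1) - (digamma (x + (M + 1)) - digamma x) := by
      have := hPeq (M + 1); push_cast at this ⊢; linarith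
    rw [abs_le]
    constructor
    · -- lower: P - (dig x + γ) ≥ -(K+1)/(M+1)
      have : digamma (x + (M + 1)) ≤ -γ + H (M + K) := by rw [← e2]; exact mono2
      have hb : ((K : ℝ) - 1) / ((M : ℝ) + 2) ≤ ((K : ℝ) + 1) / ((M : ℝ) + 1) := by
        apply div_le_div₀ (by positivity) (by linarith) hM1 (by linarith)
      linarith [hH2, hPM, hH1]
    · have : -γ + H M ≤ digamma (x + (M + 1)) := by rw [← e1]; exact mono1
      have h1 : (1 : ℝ) / ((M : ℝ) + 1) ≤ ((K : ℝ) + 1) / ((M : ℝ) + 1) := by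
        apply (div_le_div_iff_of_pos_right hM1).mpr (by linarith)
      linarith [hPM, hH1]
  have hT0 : Tendsto (fun M : ℕ => ((K:ℝ)+1)/((M:ℝ)+1)) atTop (𝓝 0) := by
    have h := (tendsto_const_div_atTop_nhds_zero_nat ((K:ℝ)+1)).comp (tendsto_add_atTop_nat 1)
    simpa [Function.comp_def, Nat.cast_add_one] using h
  have h2 : Tendsto (fun M : ℕ => P (M + 1)) atTop (𝓝 (digamma x + γ)) := by
    rw [← tendsto_sub_nhds_zero_iff]
    exact squeeze_zero_norm hbound hT0
  have h3 : Tendsto P atTop (𝓝 (digamma x + γ)) := (tendsto_add_atTop_iff_nat 1).mp h2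
  have h4 : Tendsto P atTop (𝓝 (∑' n : ℕ, (1 / ((n : ℝ) + 1) - 1 / (x + n)))) :=
    (F_summable hx).hasSum.tendsto_sum_nat
  have := tendsto_nhds_unique h3 h4
  linarith

noncomputable def S (k : ℕ) (x : ℝ) : ℝ := ∑' n : ℕ, (((x : ℝ) + n) ^ k)⁻¹

lemma S_summable {k : ℕ} (hk : 2 ≤ k) {x : ℝ} (hx : 0 < x) :
    Summable (fun n : ℕ => ((x + (n : ℝ)) ^ k)⁻¹) := by
  rw [← summable_nat_add_iff 1]
  have hs : Summable (fun n : ℕ => (((n : ℝ) + 1) ^ 2)⁻¹) := by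
    have : Summable (fun n : ℕ => 1 / ((n : ℝ) ^ 2)) := by
      simpa using Real.summable_one_div_nat_pow.mpr (le_refl 2)
    have := (summable_nat_add_iff 1).mpr this
    simpa [one_div] using this
  apply Summable.of_nonneg_of_le (fun n => by positivity) (fun n => ?_) hs
  have h1 : (1 : ℝ) ≤ (n : ℝ) + 1 := by nlinarith [Nat.cast_nonneg (α := ℝ) n]
  have h2 : ((n : ℝ) + 1) ^ 2 ≤ ((n : ℝ) + 1) ^ k := pow_le_pow_right₀ h1 hk
  have h3 : ((n : ℝ) + 1) ^ k ≤ (x + ((n : ℝ) + 1)) ^ k := by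
    apply pow_le_pow_left₀ (by positivity) (by linarith)
  have : (0:ℝ) < ((n : ℝ) + 1) ^ 2 := by positivity
  have hcast : ((n + 1 : ℕ) : ℝ) = (n : ℝ) + 1 := by push_cast; ring
  rw [hcast]
  exact inv_anti₀ this (by linarith)

lemma term_hasDerivAt {k n : ℕ} {y : ℝ} (hy : 0 < y + n) :
    HasDerivAt (fun t : ℝ => ((t + (n : ℝ)) ^ k)⁻¹)
      (-(k : ℝ) * ((y + (n : ℝ)) ^ (k + 1))⁻¹) y := by
  have h1 : HasDerivAt (fun t : ℝ => (t + (n : ℝ)) ^ k)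
      ((k : ℝ) * (y + (n : ℝ)) ^ (k - 1) * 1) y :=
    ((hasDerivAt_id y).add_const (n : ℝ)).pow k
  have h2 : HasDerivAt (fun t : ℝ => ((t + (n : ℝ)) ^ k)⁻¹)
      (-((k : ℝ) * (y + (n : ℝ)) ^ (k - 1) * 1) / ((y + (n : ℝ)) ^ k) ^ 2) y :=
    h1.inv (pow_ne_zero k hy.ne')
  convert h2 using 1
  rcases Nat.eq_zero_or_pos k with rfl | hk
  · simp
  have hne : (y + (n:ℝ)) ≠ 0 := hy.ne'
  field_simp
  have e : ((y + (n:ℝ)) ^ k) ^ 2 = (y + (n:ℝ)) ^ (k - 1) * (y + (n:ℝ)) ^ (k + 1) := by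
    rw [← pow_add, ← pow_mul]
    congr 1
    omega
  rw [e]
  ring

lemma S_bound_aux {k : ℕ} {x y : ℝ} (hx2 : 0 < x) (hy : x / 2 < y) (n : ℕ) :
    ‖-(k : ℝ) * ((y + (n : ℝ)) ^ (k + 1))⁻¹‖ ≤ (k : ℝ) * ((x / 2 + (n : ℝ)) ^ (k + 1))⁻¹ := by
  have h0 : (0 : ℝ) < x / 2 + n := by positivity
  have h1 : (0 : ℝ) < y + n := by nlinarith [Nat.cast_nonneg (α := ℝ) n]
  rw [norm_mul, norm_neg, Real.norm_natCast, norm_inv, Real.norm_eq_abs,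
    abs_of_pos (by positivity)]
  have hp := pow_le_pow_left₀ h0.le (show x / 2 + (n:ℝ) ≤ y + n by linarith) (k + 1)
  exact mul_le_mul_of_nonneg_left (inv_anti₀ (by positivity) hp) (Nat.cast_nonneg k)

lemma S_hasDerivAt {k : ℕ} (hk : 2 ≤ k) {x : ℝ} (hx : 0 < x) :
    HasDerivAt (S k) (-(k : ℝ) * S (k + 1) x) x := by
  have key : HasDerivAt (fun y : ℝ => ∑' n : ℕ, ((y + (n : ℝ)) ^ k)⁻¹)
      (∑' n : ℕ, -(k : ℝ) * ((x + (n : ℝ)) ^ (k + 1))⁻¹) x := by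
    apply hasDerivAt_tsum_of_isPreconnected
      (g := fun (n : ℕ) (y : ℝ) => ((y + (n : ℝ)) ^ k)⁻¹)
      (g' := fun (n : ℕ) (y : ℝ) => -(k : ℝ) * ((y + (n : ℝ)) ^ (k + 1))⁻¹)
      (u := fun n : ℕ => (k : ℝ) * ((x / 2 + (n : ℝ)) ^ (k + 1))⁻¹)
      (((S_summable (by omega) (by positivity)).mul_left _)) isOpen_Ioi
      (isPreconnected_Ioi) (t := Ioi (x / 2)) (y₀ := x)
    · intro n y hy
      have : (0 : ℝ) < y + n := by
        have := mem_Ioi.mp hy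
        nlinarith [Nat.cast_nonneg (α := ℝ) n]
      exact term_hasDerivAt this
    · intro n y hy
      exact S_bound_aux hx (mem_Ioi.mp hy) n
    · exact mem_Ioi.mpr (by linarith)
    · exact S_summable hk hx
    · exact mem_Ioi.mpr (by linarith)
  unfold S
  convert key using 1
  rw [tsum_mul_left]

lemma F_hasDerivAt {x : ℝ} (hx : 0 < x) :
    HasDerivAt (fun y : ℝ => ∑' n : ℕ, (1 / ((n : ℝ) + 1) - 1 / (y + n))) (S 2 x) x := by
  have key : HasDerivAt (fun y : ℝ => ∑' n : ℕ, (1 / ((n : ℝ) + 1) - 1 / (y + n)))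
      (∑' n : ℕ, ((x + (n : ℝ)) ^ 2)⁻¹) x := by
    apply hasDerivAt_tsum_of_isPreconnected
      (g := fun (n : ℕ) (y : ℝ) => 1 / ((n : ℝ) + 1) - 1 / (y + n))
      (g' := fun (n : ℕ) (y : ℝ) => ((y + (n : ℝ)) ^ 2)⁻¹)
      (u := fun n : ℕ => ((x / 2 + (n : ℝ)) ^ 2)⁻¹)
      (S_summable (le_refl 2) (by positivity)) isOpen_Ioi
      (isPreconnected_Ioi) (t := Ioi (x / 2)) (y₀ := x)
    · intro n y hy
      have h1 : (0 : ℝ) < y + n := by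
        have := mem_Ioi.mp hy
        nlinarith [Nat.cast_nonneg (α := ℝ) n]
      have h2 : HasDerivAt (fun t : ℝ => (t + (n : ℝ))⁻¹) (-1 / (y + (n : ℝ)) ^ 2) y := by
        exact ((hasDerivAt_id y).add_const (n : ℝ)).inv h1.ne'
      have h3 : HasDerivAt (fun t : ℝ => 1 / ((n : ℝ) + 1) - (t + (n : ℝ))⁻¹)
          (0 - -1 / (y + (n : ℝ)) ^ 2) y := (hasDerivAt_const y (1 / ((n : ℝ) + 1))).sub h2
      simp only [one_div] at h3 ⊢
      exact h3.congr_deriv (by ring)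
    · intro n y hy
      have h0 : (0 : ℝ) < x / 2 + n := by positivity
      have h1 : (0 : ℝ) < y + n := by
        have := mem_Ioi.mp hy
        nlinarith [Nat.cast_nonneg (α := ℝ) n]
      rw [norm_inv, Real.norm_eq_abs, abs_of_pos (by positivity)]
      exact inv_anti₀ (by positivity)
        (pow_le_pow_left₀ h0.le (by linarith [mem_Ioi.mp hy]) 2)
    · exact mem_Ioi.mpr (by linarith)
    · exact F_summable hx
    · exact mem_Ioi.mpr (by linarith)
  simpa [S] using key

lemma iter_hasDerivAt : ∀ j : ℕ, ∀ x : ℝ, 0 < x →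
    HasDerivAt (iteratedDeriv j digamma)
      ((-1 : ℝ) ^ j * ((j + 1).factorial : ℝ) * S (j + 2) x) x := by
  intro j
  induction j with
  | zero =>
    intro x hx
    rw [iteratedDeriv_zero]
    have h1 : HasDerivAt (fun y : ℝ => -γ + ∑' n : ℕ, (1 / ((n : ℝ) + 1) - 1 / (y + n)))
        (S 2 x) x := (F_hasDerivAt hx).const_add (-γ)
    have h2 : digamma =ᶠ[𝓝 x]
        fun y : ℝ => -γ + ∑' n : ℕ, (1 / ((n : ℝ) + 1) - 1 / (y + n)) := by
      filter_upwards [Ioi_mem_nhds hx] with y hy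
      exact digamma_eq_tsum hy
    have h3 : HasDerivAt digamma (S 2 x) x := h1.congr_of_eventuallyEq h2
    convert h3 using 1
    norm_num
  | succ j ih =>
    intro x hx
    have heq : iteratedDeriv (j + 1) digamma =ᶠ[𝓝 x]
        fun y : ℝ => (-1 : ℝ) ^ j * ((j + 1).factorial : ℝ) * S (j + 2) y := by
      filter_upwards [Ioi_mem_nhds hx] with y hy
      rw [iteratedDeriv_succ]
      exact (ih y hy).deriv
    have h1 : HasDerivAt (fun y : ℝ => (-1 : ℝ) ^ j * ((j + 1).factorial : ℝ) * S (j + 2) y)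
        ((-1 : ℝ) ^ j * ((j + 1).factorial : ℝ) * (-((j : ℝ) + 2) * S (j + 3) x)) x := by
      exact (S_hasDerivAt (by omega) hx).const_mul _ |>.congr_deriv (by push_cast; ring)
    have h2 : HasDerivAt (iteratedDeriv (j + 1) digamma)
        ((-1 : ℝ) ^ j * ((j + 1).factorial : ℝ) * (-((j : ℝ) + 2) * S (j + 3) x)) x :=
      h1.congr_of_eventuallyEq heq
    convert h2 using 1
    rw [Nat.factorial_succ]
    push_cast
    ring_nf

lemma term_ineq {b c : ℝ} (hb : 0 < b) (hbc : b ≤ c) {p i : ℕ} (hi : i < p) :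
    b * c * (c ^ i * b ^ (p - 1 - i)) + b * c * (c ^ (p - 1 - i) * b ^ i)
      ≤ b ^ (p + 1) + c ^ (p + 1) := by
  have hc : 0 < c := lt_of_lt_of_le hb hbc
  have h₁ : c ^ (i + 1) = c ^ i * c := pow_succ c i
  have h₂ : b ^ (p - i) = b ^ (p - 1 - i) * b := by rw [← pow_succ]; congr 1; omega
  have h₃ : c ^ (p - i) = c ^ (p - 1 - i) * c := by rw [← pow_succ]; congr 1; omega
  have h₄ : b ^ (i + 1) = b ^ i * b := pow_succ b i
  have e1 : b * c * (c ^ i * b ^ (p - 1 - i)) = c ^ (i + 1) * b ^ (p - i) := by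
    rw [h₁, h₂]; ring
  have e2 : b * c * (c ^ (p - 1 - i) * b ^ i) = c ^ (p - i) * b ^ (i + 1) := by
    rw [h₃, h₄]; ring
  rw [e1, e2]
  have h1 : 0 ≤ (c ^ (p - i) - b ^ (p - i)) * (c ^ (i + 1) - b ^ (i + 1)) :=
    mul_nonneg (by nlinarith [pow_le_pow_left₀ hb.le hbc (p - i)])
      (by nlinarith [pow_le_pow_left₀ hb.le hbc (i + 1)])
  have hadd : (p - i) + (i + 1) = p + 1 := by omega
  have e3 : c ^ (p - i) * c ^ (i + 1) = c ^ (p + 1) := by rw [← pow_add, hadd]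
  have e4 : b ^ (p - i) * b ^ (i + 1) = b ^ (p + 1) := by rw [← pow_add, hadd]
  nlinarith [h1]

lemma interval_bounds {b : ℝ} (hb : 0 < b) {p : ℕ} (hp : 1 ≤ p) :
    ((b + 1) ^ (p + 1))⁻¹ ≤ ((b ^ p)⁻¹ - ((b + 1) ^ p)⁻¹) / p ∧
      ((b ^ p)⁻¹ - ((b + 1) ^ p)⁻¹) / p ≤ ((b ^ (p + 1))⁻¹ + ((b + 1) ^ (p + 1))⁻¹) / 2 := by
  set c : ℝ := b + 1 with hc
  have hc0 : 0 < c := by rw [hc]; linarith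
  have hbc : b ≤ c := by rw [hc]; linarith
  set D : ℝ := ∑ i ∈ Finset.range p, c ^ i * b ^ (p - 1 - i) with hD
  have hgeom : c ^ p - b ^ p = D := by
    have := geom_sum₂_mul c b p
    rw [show c - b = 1 by rw [hc]; ring, mul_one] at this
    rw [← this]
  have hsub : (b ^ p)⁻¹ - (c ^ p)⁻¹ = D / (b ^ p * c ^ p) := by
    rw [← hgeom]
    field_simp
  have hD_lb : (p : ℝ) * b ^ (p - 1) ≤ D := by
    rw [hD]
    calc (p : ℝ) * b ^ (p - 1) = ∑ _i ∈ Finset.range p, b ^ (p - 1) := by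
          rw [Finset.sum_const, Finset.card_range, nsmul_eq_mul]
      _ ≤ _ := by
          apply Finset.sum_le_sum
          intro i hi
          have hi' := Finset.mem_range.mp hi
          have h1 : b ^ (p - 1) = b ^ i * b ^ (p - 1 - i) := by
            rw [← pow_add]; congr 1; omega
          rw [h1]
          exact mul_le_mul_of_nonneg_right (pow_le_pow_left₀ hb.le hbc i) (by positivity)
  have hD_ub : 2 * b * c * D ≤ (p : ℝ) * (b ^ (p + 1) + c ^ (p + 1)) := by
    have base := Finset.sum_range_reflect (fun i => b * c * (c ^ i * b ^ (p - 1 - i))) p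
    have hrefl : ∑ i ∈ Finset.range p, b * c * (c ^ (p - 1 - i) * b ^ i)
        = ∑ i ∈ Finset.range p, b * c * (c ^ i * b ^ (p - 1 - i)) := by
      rw [← base]
      apply Finset.sum_congr rfl
      intro i hi
      have hi' := Finset.mem_range.mp hi
      have : p - 1 - (p - 1 - i) = i := by omega
      rw [this]
    have key : ∑ i ∈ Finset.range p,
        (b * c * (c ^ i * b ^ (p - 1 - i)) + b * c * (c ^ (p - 1 - i) * b ^ i))
        ≤ ∑ _i ∈ Finset.range p, (b ^ (p + 1) + c ^ (p + 1)) := by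
      apply Finset.sum_le_sum
      intro i hi
      exact term_ineq hb hbc (Finset.mem_range.mp hi)
    rw [Finset.sum_add_distrib, hrefl, Finset.sum_const, Finset.card_range,
      nsmul_eq_mul] at key
    have e : ∑ i ∈ Finset.range p, b * c * (c ^ i * b ^ (p - 1 - i)) = b * c * D := by
      rw [hD, Finset.mul_sum]
    rw [e] at key
    linarith
  have hp0 : (0 : ℝ) < p := by exact_mod_cast hp
  have hBp : (0 : ℝ) < b ^ p := by positivity
  have hCp : (0 : ℝ) < c ^ p := by positivity
  have hbp : b ^ p = b ^ (p - 1) * b := by rw [← pow_succ]; congr 1; omega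
  have hbk : b ^ (p + 1) = b ^ p * b := pow_succ b p
  have hck : c ^ (p + 1) = c ^ p * c := pow_succ c p
  constructor
  · rw [hsub, div_div, inv_eq_one_div, div_le_div_iff₀ (by positivity) (by positivity)]
    -- 1 * (b^p*c^p*p) ≤ D * c^(p+1)
    have h1 := mul_le_mul_of_nonneg_right hD_lb (show (0:ℝ) ≤ c ^ p * c by positivity)
    have h2 : (p : ℝ) * b ^ (p - 1) * (c ^ p * b) ≤ (p : ℝ) * b ^ (p - 1) * (c ^ p * c) := by
      have hA : (0:ℝ) ≤ (p : ℝ) * b ^ (p - 1) * c ^ p := by positivity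
      nlinarith [hA]
    rw [hck, hbp]
    nlinarith [h1, h2]
  · rw [hsub, div_div]
    have hrhs : ((b ^ (p + 1))⁻¹ + (c ^ (p + 1))⁻¹)
        = (c ^ (p + 1) + b ^ (p + 1)) / (b ^ (p + 1) * c ^ (p + 1)) := by
      field_simp
    rw [hrhs, div_div, div_le_div_iff₀ (by positivity) (by positivity)]
    have h1 := mul_le_mul_of_nonneg_right hD_ub (show (0:ℝ) ≤ b ^ p * c ^ p by positivity)
    rw [hbk, hck] at h1 ⊢
    nlinarith [h1]

lemma tele_hasSum {p : ℕ} (hp : 1 ≤ p) {x : ℝ} (hx : 0 < x) :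
    HasSum (fun n : ℕ => ((x + (n : ℝ)) ^ p)⁻¹ - ((x + ((n : ℝ) + 1)) ^ p)⁻¹) ((x ^ p)⁻¹) := by
  set a : ℕ → ℝ := fun n => ((x + (n : ℝ)) ^ p)⁻¹ with ha
  have hmono : ∀ n : ℕ, a (n + 1) ≤ a n := by
    intro n
    apply inv_anti₀ (by positivity)
    apply pow_le_pow_left₀ (by positivity)
    push_cast
    linarith
  have hterm : ∀ n : ℕ, ((x + (n : ℝ)) ^ p)⁻¹ - ((x + ((n : ℝ) + 1)) ^ p)⁻¹ = a n - a (n + 1) := by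
    intro n; rw [ha]; push_cast; ring_nf
  have hpart : ∀ N : ℕ, ∑ n ∈ Finset.range N, (a n - a (n + 1)) = a 0 - a N :=
    fun N => Finset.sum_range_sub' a N
  have hlim : Tendsto a atTop (𝓝 0) := by
    apply Filter.Tendsto.inv_tendsto_atTop
    apply (tendsto_pow_atTop (by omega : p ≠ 0)).comp
    exact tendsto_atTop_add_const_left _ x tendsto_natCast_atTop_atTop
  have hsummable : Summable (fun n : ℕ => a n - a (n + 1)) := by
    apply summable_of_sum_range_le (c := a 0)
    · intro n; linarith [hmono n]
    · intro N
      rw [hpart N]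
      have : (0:ℝ) ≤ a N := by rw [ha]; positivity
      linarith
  have h1 : Tendsto (fun N => ∑ n ∈ Finset.range N, (a n - a (n + 1))) atTop
      (𝓝 (∑' n, (a n - a (n + 1)))) := hsummable.hasSum.tendsto_sum_nat
  have h2 : Tendsto (fun N => ∑ n ∈ Finset.range N, (a n - a (n + 1))) atTop (𝓝 (a 0)) := by
    simp only [hpart]
    have := (tendsto_const_nhds (x := a 0) (f := atTop (α := ℕ))).sub hlim
    simpa using this
  have hval : ∑' n, (a n - a (n + 1)) = a 0 := tendsto_nhds_unique h1 h2
  have h0 : a 0 = (x ^ p)⁻¹ := by rw [ha]; norm_num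
  have := hsummable.hasSum
  rw [hval, h0] at this
  have hfun : (fun n : ℕ => ((x + (n : ℝ)) ^ p)⁻¹ - ((x + ((n : ℝ) + 1)) ^ p)⁻¹)
      = fun n : ℕ => a n - a (n + 1) := by
    funext n; exact hterm n
  rw [hfun]
  exact this

lemma S_shift_summable {k : ℕ} (hk : 2 ≤ k) {x : ℝ} (hx : 0 < x) :
    Summable (fun n : ℕ => ((x + ((n : ℝ) + 1)) ^ k)⁻¹) := by
  have := (summable_nat_add_iff 1).mpr (S_summable hk hx)
  apply this.congr
  intro n
  push_cast
  ring_nf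

lemma S_shift_eq {k : ℕ} (hk : 2 ≤ k) {x : ℝ} (hx : 0 < x) :
    S k x = (x ^ k)⁻¹ + ∑' n : ℕ, ((x + ((n : ℝ) + 1)) ^ k)⁻¹ := by
  unfold S
  rw [(S_summable hk hx).tsum_eq_zero_add]
  norm_num

lemma S_bounds {p : ℕ} (hp : 1 ≤ p) {x : ℝ} (hx : 0 < x) :
    (x ^ p)⁻¹ / p + (x ^ (p + 1))⁻¹ / 2 ≤ S (p + 1) x ∧
      S (p + 1) x ≤ (x ^ p)⁻¹ / p + (x ^ (p + 1))⁻¹ := by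
  have hk : 2 ≤ p + 1 := by omega
  have tele := tele_hasSum hp hx
  have teleP := tele.div_const (p : ℝ)
  have hTsum := S_shift_summable hk hx
  have hSsum := S_summable hk hx
  have hle1 : ∀ n : ℕ, ((x + ((n : ℝ) + 1)) ^ (p + 1))⁻¹ ≤
      (((x + (n : ℝ)) ^ p)⁻¹ - ((x + ((n : ℝ) + 1)) ^ p)⁻¹) / p := by
    intro n
    have hb : (0 : ℝ) < x + n := by positivity
    have h := (interval_bounds hb hp).1
    have e : x + ((n : ℝ) + 1) = (x + (n : ℝ)) + 1 := by ring
    rw [e]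
    exact h
  have hle2 : ∀ n : ℕ, (((x + (n : ℝ)) ^ p)⁻¹ - ((x + ((n : ℝ) + 1)) ^ p)⁻¹) / p ≤
      (((x + (n : ℝ)) ^ (p + 1))⁻¹ + ((x + ((n : ℝ) + 1)) ^ (p + 1))⁻¹) / 2 := by
    intro n
    have hb : (0 : ℝ) < x + n := by positivity
    have h := (interval_bounds hb hp).2
    have e : x + ((n : ℝ) + 1) = (x + (n : ℝ)) + 1 := by ring
    rw [e]
    exact h
  constructor
  · -- lower bound
    have hsum2 : HasSum (fun n : ℕ =>
        (((x + (n : ℝ)) ^ (p + 1))⁻¹ + ((x + ((n : ℝ) + 1)) ^ (p + 1))⁻¹) / 2)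
        ((S (p + 1) x + (S (p + 1) x - (x ^ (p + 1))⁻¹)) / 2) := by
      have hT : HasSum (fun n : ℕ => ((x + ((n : ℝ) + 1)) ^ (p + 1))⁻¹)
          (S (p + 1) x - (x ^ (p + 1))⁻¹) := by
        have := hTsum.hasSum
        have he : ∑' n : ℕ, ((x + ((n : ℝ) + 1)) ^ (p + 1))⁻¹
            = S (p + 1) x - (x ^ (p + 1))⁻¹ := by
          rw [S_shift_eq hk hx]; ring
        rwa [he] at this
      exact (hSsum.hasSum.add hT).div_const 2
    have := Summable.tsum_le_tsum (f := fun n : ℕ =>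
        (((x + (n : ℝ)) ^ p)⁻¹ - ((x + ((n : ℝ) + 1)) ^ p)⁻¹) / p)
      hle2 teleP.summable hsum2.summable
    rw [teleP.tsum_eq, hsum2.tsum_eq] at this
    linarith
  · -- upper bound
    have := Summable.tsum_le_tsum hle1 hTsum teleP.summable
    rw [teleP.tsum_eq] at this
    rw [S_shift_eq hk hx]
    linarith


/-- Standard two-sided bounds for the polygamma function of order `m ≥ 1` at `x > 0`. -/

theorem stmt2 (m : ℕ) (hm : 1 ≤ m) (x : ℝ) (hx : 0 < x) :
    ((m - 1).factorial : ℝ) / x ^ m + (m.factorial : ℝ) / (2 * x ^ (m + 1)) ≤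
        (-1 : ℝ) ^ (m + 1) * polygamma m x ∧
      (-1 : ℝ) ^ (m + 1) * polygamma m x ≤
        ((m - 1).factorial : ℝ) / x ^ m + (m.factorial : ℝ) / x ^ (m + 1) := by
  obtain ⟨j, rfl⟩ : ∃ j, m = j + 1 := ⟨m - 1, by omega⟩
  have hval : polygamma (j + 1) x = (-1 : ℝ) ^ j * ((j + 1).factorial : ℝ) * S (j + 2) x := by
    unfold polygamma
    rw [iteratedDeriv_succ]
    exact (iter_hasDerivAt j x hx).deriv
  have hone : (-1 : ℝ) ^ (j + 1 + 1) * (-1 : ℝ) ^ j = 1 := by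
    rw [← pow_add, show j + 1 + 1 + j = 2 * (j + 1) by omega, pow_mul]
    norm_num
  have hsign : (-1 : ℝ) ^ (j + 1 + 1) * polygamma (j + 1) x
      = ((j + 1).factorial : ℝ) * S (j + 2) x := by
    rw [hval, ← mul_assoc, ← mul_assoc, hone, one_mul]
  have hS := S_bounds (p := j + 1) (by omega) hx
  have hfac : (0 : ℝ) ≤ ((j + 1).factorial : ℝ) := Nat.cast_nonneg _
  have hj1 : (0 : ℝ) < (j : ℝ) + 1 := by positivity
  have hfaceq : (((j + 1).factorial : ℝ)) = ((j : ℝ) + 1) * (j.factorial : ℝ) := by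
    rw [Nat.factorial_succ]; push_cast; ring
  have hsimp : (j + 1 - 1) = j := by omega
  rw [hsign, hsimp]
  have hx1 : (0 : ℝ) < x ^ (j + 1) := by positivity
  have hx2 : (0 : ℝ) < x ^ (j + 1 + 1) := by positivity
  constructor
  · have h1 := mul_le_mul_of_nonneg_left hS.1 hfac
    have e : ((j + 1).factorial : ℝ) * ((x ^ (j + 1))⁻¹ / (↑(j + 1)) + (x ^ (j + 1 + 1))⁻¹ / 2)
        = (j.factorial : ℝ) / x ^ (j + 1) + ((j + 1).factorial : ℝ) / (2 * x ^ (j + 1 + 1)) := by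
      rw [hfaceq]
      push_cast
      field_simp
    rw [e] at h1
    exact h1
  · have h1 := mul_le_mul_of_nonneg_left hS.2 hfac
    have e : ((j + 1).factorial : ℝ) * ((x ^ (j + 1))⁻¹ / (↑(j + 1)) + (x ^ (j + 1 + 1))⁻¹)
        = (j.factorial : ℝ) / x ^ (j + 1) + ((j + 1).factorial : ℝ) / x ^ (j + 1 + 1) := by
      rw [hfaceq]
      push_cast
      field_simp
    rw [e] at h1
    exact h1
end

section
/- Let X_1, …, X_n be i.i.d. copies of X = Σ_l sqrt(λ_l) ξ_l e_l with E[ξ_l^4] ≤ M uniformly, and let Γ_n := (1/n) Σ_i X_i ⊗ X_i and Γ := E[X ⊗ X]. Then for all l, k, E[ ⟨(Γ_n − Γ) e_l, e_k⟩^2 ] ≤ (M/n) λ_l λ_k. -/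
open MeasureTheory
open scoped BigOperators

/-- Moment bound for matrix elements of the empirical covariance operator:
`E[⟨(Γ_n − Γ)e_l, e_k⟩²] ≤ (M/n) λ_l λ_k`. -/
theorem stmt12 {H : Type*} [NormedAddCommGroup H] [InnerProductSpace ℝ H]
    [MeasurableSpace H] [BorelSpace H]
    {Ω : Type*} [MeasureSpace Ω] [IsProbabilityMeasure (volume : Measure Ω)]
    (n : ℕ) [NeZero n] (X : Fin n → Ω → H)
    (hmeas : ∀ i, Measurable (X i))
    (hindep : ProbabilityTheory.iIndepFun X volume)
    (hid : ∀ i, ProbabilityTheory.IdentDistrib (X i) (X ⟨0, Nat.pos_of_neZero n⟩) volume volume)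
    (e : ℕ → H) (he : Orthonormal ℝ e)
    (lam : ℕ → ℝ) (hpos : ∀ l, 0 < lam l) (hsum : Summable lam)
    (ξ : ℕ → Fin n → Ω → ℝ)
    (hKL : ∀ l i, ∀ᵐ ω, (inner ℝ (X i ω) (e l) : ℝ) = Real.sqrt (lam l) * ξ l i ω)
    (hmean : ∀ l i, ∫ ω, ξ l i ω = 0)
    (hcov : ∀ l l' i, ∫ ω, ξ l i ω * ξ l' i ω = if l = l' then 1 else 0)
    (M : ℝ)
    (hint4 : ∀ l i, Integrable (fun ω => (ξ l i ω) ^ 4))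
    (hM : ∀ l i, ∫ ω, (ξ l i ω) ^ 4 ≤ M) :
    ∀ l k, ∫ ω, ((1 / (n : ℝ)) * ∑ i, (inner ℝ (X i ω) (e l) : ℝ) * (inner ℝ (X i ω) (e k) : ℝ)
        - ∫ ω', (inner ℝ (X ⟨0, Nat.pos_of_neZero n⟩ ω') (e l) : ℝ) * (inner ℝ (X ⟨0, Nat.pos_of_neZero n⟩ ω') (e k) : ℝ)) ^ 2
      ≤ (M / (n : ℝ)) * (lam l * lam k) := by
  intro l k
  classical
  have hn : (n : ℝ) ≠ 0 := Nat.cast_ne_zero.mpr (NeZero.ne n)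
  set i0 : Fin n := ⟨0, Nat.pos_of_neZero n⟩ with hi0
  set f : H → ℝ := fun x => (inner ℝ x (e l) : ℝ) * (inner ℝ x (e k) : ℝ) with hfdef
  have hfm : Measurable f :=
    ((continuous_id.inner continuous_const).mul
      (continuous_id.inner continuous_const)).measurable
  set Y : Fin n → Ω → ℝ := fun i ω => f (X i ω) with hYdef
  have hYm : ∀ i, Measurable (Y i) := fun i => hfm.comp (hmeas i)
  have hll : (0:ℝ) ≤ lam l * lam k := le_of_lt (mul_pos (hpos l) (hpos k))
  have hae : ∀ i, ∀ᵐ ω, (Y i ω) ^ 2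
      = (lam l * lam k) * ((ξ l i ω) ^ 2 * (ξ k i ω) ^ 2) := by
    intro i
    filter_upwards [hKL l i, hKL k i] with ω h1 h2
    have hsl : Real.sqrt (lam l) ^ 2 = lam l := Real.sq_sqrt (hpos l).le
    have hsk : Real.sqrt (lam k) ^ 2 = lam k := Real.sq_sqrt (hpos k).le
    calc (Y i ω) ^ 2
        = Real.sqrt (lam l) ^ 2 * (ξ l i ω) ^ 2
          * (Real.sqrt (lam k) ^ 2 * (ξ k i ω) ^ 2) := by
          simp only [Y, f, h1, h2]; ring
      _ = (lam l * lam k) * ((ξ l i ω) ^ 2 * (ξ k i ω) ^ 2) := by rw [hsl, hsk]; ring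
  have haesq : ∀ i, ∀ᵐ ω, ‖(Y i ω) ^ 2‖
      ≤ (lam l * lam k) * (((ξ l i ω) ^ 4 + (ξ k i ω) ^ 4) / 2) := by
    intro i
    filter_upwards [hae i] with ω h
    rw [Real.norm_eq_abs, abs_of_nonneg (sq_nonneg _), h]
    have h2 : (ξ l i ω) ^ 2 * (ξ k i ω) ^ 2 ≤ ((ξ l i ω) ^ 4 + (ξ k i ω) ^ 4) / 2 := by
      nlinarith [sq_nonneg ((ξ l i ω) ^ 2 - (ξ k i ω) ^ 2)]
    exact mul_le_mul_of_nonneg_left h2 hll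
  have hg : ∀ i : Fin n,
      Integrable (fun ω => (lam l * lam k) * (((ξ l i ω) ^ 4 + (ξ k i ω) ^ 4) / 2)) := by
    intro i
    exact (((hint4 l i).add (hint4 k i)).div_const 2).const_mul _
  have hsqInt : ∀ i, Integrable (fun ω => (Y i ω) ^ 2) := fun i =>
    Integrable.mono' (hg i) ((hYm i).pow_const 2).aestronglyMeasurable (haesq i)
  have hmem : ∀ i, MemLp (Y i) 2 volume := fun i =>
    (memLp_two_iff_integrable_sq (hYm i).aestronglyMeasurable).mpr (hsqInt i)
  have hInt : ∀ i, Integrable (Y i) := fun i => (hmem i).integrable one_le_two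
  -- variance bound for each Y i
  have hvar : ∀ i, ProbabilityTheory.variance (Y i) volume ≤ M * (lam l * lam k) := by
    intro i
    refine le_trans (ProbabilityTheory.variance_le_expectation_sq
      (hYm i).aestronglyMeasurable) ?_
    have h1 : ∫ ω, (Y i ω) ^ 2
        ≤ ∫ ω, (lam l * lam k) * (((ξ l i ω) ^ 4 + (ξ k i ω) ^ 4) / 2) := by
      refine integral_mono_ae (hsqInt i) (hg i) ?_
      filter_upwards [haesq i] with ω h
      exact le_trans (le_abs_self _) h
    have h2 : ∫ ω, (lam l * lam k) * (((ξ l i ω) ^ 4 + (ξ k i ω) ^ 4) / 2)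
        = (lam l * lam k) * (((∫ ω, (ξ l i ω) ^ 4) + ∫ ω, (ξ k i ω) ^ 4) / 2) := by
      rw [integral_const_mul, integral_div, integral_add (hint4 l i) (hint4 k i)]
    have h3 : (lam l * lam k) * (((∫ ω, (ξ l i ω) ^ 4) + ∫ ω, (ξ k i ω) ^ 4) / 2)
        ≤ (lam l * lam k) * M := by
      refine mul_le_mul_of_nonneg_left ?_ hll
      have := hM l i; have := hM k i; linarith
    simp only [Pi.pow_apply]
    rw [mul_comm M]
    linarith [h1, h2, h3]
  -- all means are equal
  have hmeq : ∀ i, ∫ ω, Y i ω = ∫ ω, Y i0 ω := fun i =>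
    (ProbabilityTheory.IdentDistrib.comp (hid i) hfm).integral_eq
  set m : ℝ := ∫ ω, Y i0 ω with hm
  set S : Ω → ℝ := ((n : ℝ)⁻¹) • ∑ i, Y i with hS
  have hSapp : ∀ ω, S ω = (n : ℝ)⁻¹ * ∑ i, Y i ω := by
    intro ω
    simp [S, Finset.sum_apply]
  have hSmem : MemLp S 2 volume :=
    (memLp_finset_sum' _ fun i _ => hmem i).const_smul _
  have hES : ∫ ω, S ω = m := by
    simp only [hSapp]
    rw [integral_const_mul, integral_finset_sum _ fun i _ => hInt i]
    rw [Finset.sum_congr rfl fun i _ => hmeq i]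
    simp [Finset.sum_const, mul_comm, hn]
  -- rewrite goal as variance
  have hgoal : (∫ ω, ((1 / (n : ℝ)) * ∑ i, (inner ℝ (X i ω) (e l) : ℝ) * (inner ℝ (X i ω) (e k) : ℝ)
        - ∫ ω', (inner ℝ (X i0 ω') (e l) : ℝ) * (inner ℝ (X i0 ω') (e k) : ℝ)) ^ 2)
      = ProbabilityTheory.variance S volume := by
    rw [ProbabilityTheory.variance_eq_integral hSmem.aemeasurable, hES]
    congr 1
    funext ω
    simp only [Pi.pow_apply, Pi.sub_apply, hSapp ω, one_div]
    rfl
  rw [hgoal]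
  -- variance of the average
  have hvs : ProbabilityTheory.variance S volume
      = ((n : ℝ)⁻¹) ^ 2 * ∑ i, ProbabilityTheory.variance (Y i) volume := by
    rw [hS, ProbabilityTheory.variance_smul]
    congr 1
    exact ProbabilityTheory.IndepFun.variance_sum (fun i _ => hmem i)
      (fun i _ j _ hij => ((hindep.indepFun hij).comp hfm hfm))
  rw [hvs]
  have hsumle : ∑ i, ProbabilityTheory.variance (Y i) volume
      ≤ (n : ℝ) * (M * (lam l * lam k)) := by
    calc ∑ i : Fin n, ProbabilityTheory.variance (Y i) volume
        ≤ ∑ _i : Fin n, M * (lam l * lam k) := Finset.sum_le_sum fun i _ => hvar i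
      _ = (n : ℝ) * (M * (lam l * lam k)) := by simp [mul_comm]
  calc ((n : ℝ)⁻¹) ^ 2 * ∑ i, ProbabilityTheory.variance (Y i) volume
      ≤ ((n : ℝ)⁻¹) ^ 2 * ((n : ℝ) * (M * (lam l * lam k))) :=
        mul_le_mul_of_nonneg_left hsumle (by positivity)
    _ = (M / (n : ℝ)) * (lam l * lam k) := by field_simp
end
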